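/- Let n ≥ 2 and 12 ≤ m < n - 2 be integers, and let (tᵢ)_{2 ≤ i ≤ m} be nonnegative reals with Σᵢ i(i-1)tᵢ = n(n-1) and t₂ + (3/2)t₃ ≥ 8 + Σ_{i≥4}(2i - 15/2)tᵢ. Then f := 1 + Σᵢ (i-1)tᵢ satisfies f ≥ ((3m - 17/2)(n² - n) + 9m² - 21m + 1)/(m² + 3m - 15). -/

import Mathlib

theorem stmt14 (n m : ℕ) (hn : 2 ≤ n) (hm : 12 ≤ m) (hmn : m + 2 < n)
    (t : ℕ → ℝ) (ht : ∀ i, 0 ≤ t i)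
    (hpairs : ∑ i ∈ Finset.Icc 2 m, (i : ℝ) * ((i : ℝ) - 1) * t i = n * ((n : ℝ) - 1))
    (hhirz : t 2 + (3 / 2) * t 3
      ≥ 8 + ∑ i ∈ Finset.Icc 4 m, (2 * (i : ℝ) - 15 / 2) * t i) :
    1 + ∑ i ∈ Finset.Icc 2 m, ((i : ℝ) - 1) * t i
      ≥ ((3 * (m : ℝ) - 17 / 2) * ((n : ℝ) ^ 2 - n) + 9 * (m : ℝ) ^ 2 - 21 * m + 1)
          / ((m : ℝ) ^ 2 + 3 * m - 15) := by
  have hm' : (12:ℝ) ≤ (m:ℝ) := by exact_mod_cast hm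
  have hK : (0:ℝ) < (m:ℝ)^2 + 3*m - 15 := by nlinarith
  rw [ge_iff_le, div_le_iff₀ hK]
  -- split Icc 2 m into {2}, {3}, Icc 4 m
  have hsplit : Finset.Icc 2 m = insert 2 (insert 3 (Finset.Icc 4 m)) := by
    ext x; simp only [Finset.mem_Icc, Finset.mem_insert]; omega
  have h2 : (2:ℕ) ∉ insert 3 (Finset.Icc 4 m) := by
    simp only [Finset.mem_insert, Finset.mem_Icc]; omega
  have h3 : (3:ℕ) ∉ Finset.Icc 4 m := by
    simp only [Finset.mem_Icc]; omega
  rw [hsplit, Finset.sum_insert h2, Finset.sum_insert h3] at hpairs ⊢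
  -- per-index inequality on Icc 4 m
  have hper : ∀ i ∈ Finset.Icc 4 m,
      (3*(m:ℝ) - 17/2) * ((i:ℝ) * ((i:ℝ)-1) * t i)
        - ((m:ℝ)^2 - 3*m + 2) * ((2*(i:ℝ) - 15/2) * t i)
      ≤ ((m:ℝ)^2 + 3*m - 15) * (((i:ℝ)-1) * t i) := by
    intro i hi
    rw [Finset.mem_Icc] at hi
    have h4 : (4:ℝ) ≤ (i:ℝ) := by exact_mod_cast hi.1
    have hle : (i:ℝ) ≤ (m:ℝ) := by exact_mod_cast hi.2
    have hti := ht i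
    have key : 0 ≤ ((m:ℝ) - i) * ((3*(m:ℝ) - 17/2)*(i:ℝ) + (39 - 17*(m:ℝ))/2) := by
      apply mul_nonneg (by linarith)
      nlinarith
    nlinarith [mul_nonneg key hti]
  have hsum4 := Finset.sum_le_sum hper
  rw [Finset.sum_sub_distrib, ← Finset.mul_sum, ← Finset.mul_sum, ← Finset.mul_sum] at hsum4
  have ht2 := ht 2
  have ht3 := ht 3
  have h36 : (0:ℝ) ≤ (m:ℝ)^2 - 15*m + 36 := by nlinarith
  have hb : (0:ℝ) ≤ (m:ℝ)^2 - 3*m + 2 := by nlinarith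
  have hH : ∑ i ∈ Finset.Icc 4 m, (2 * (i : ℝ) - 15 / 2) * t i ≤ t 2 + (3/2) * t 3 - 8 := by
    linarith
  have hbH := mul_le_mul_of_nonneg_left hH hb
  push_cast at hpairs ⊢
  nlinarith [mul_nonneg ht3 h36]
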